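/- Let f : X → Y be a map between pointed spaces such that the suspension Σf is null-homotopic. Then for any map g : Y → Z into a loop space Z = ΩW, the composite g∘f is null-homotopic provided g factors through the adjoint of a map ΣY → W; in particular, if Q : X×Y → X∧Y is the quotient map, then ΩQ is null-homotopic. -/

import Mathlib

open scoped unitInterval

/-- The based loop space of `Y` at `y`, as a subspace of the mapping space. -/
abbrev LoopSp (Y : Type) [TopologicalSpace Y] (y : Y) : Type :=
  {γ : C(I, Y) // γ 0 = y ∧ γ 1 = y}

/-- The constant loop. -/
def constLoop (Y : Type) [TopologicalSpace Y] (y : Y) : LoopSp Y y :=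
  ⟨ContinuousMap.const I y, rfl, rfl⟩

/-- The map of loop spaces induced by `f : X → Y`. -/
def loopMap {X Y : Type} [TopologicalSpace X] [TopologicalSpace Y]
    (f : C(X, Y)) (x₀ : X) : C(LoopSp X x₀, LoopSp Y (f x₀)) :=
  ⟨fun γ => ⟨f.comp γ.1, by simp [γ.2.1], by simp [γ.2.2]⟩,
    Continuous.subtype_mk
      ((ContinuousMap.continuous_postcomp f).comp continuous_subtype_val) _⟩

/-- The setoid collapsing a subset `S` to a point. -/
def collapseSetoid {Z : Type} (S : Set Z) : Setoid Z where
  r p q := p = q ∨ (p ∈ S ∧ q ∈ S)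
  iseqv := ⟨fun _ => Or.inl rfl,
    fun h => h.elim (fun e => Or.inl e.symm) (fun hh => Or.inr ⟨hh.2, hh.1⟩),
    fun h1 h2 => by
      rcases h1 with rfl | h1
      · exact h2
      · rcases h2 with rfl | h2
        · exact Or.inr h1
        · exact Or.inr ⟨h1.1, h2.2⟩⟩

/-- The quotient space collapsing `S` to a point. -/
def Collapse {Z : Type} [TopologicalSpace Z] (S : Set Z) : Type :=
  Quotient (collapseSetoid S)

instance {Z : Type} [TopologicalSpace Z] (S : Set Z) : TopologicalSpace (Collapse S) :=
  instTopologicalSpaceQuotient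

/-- The smash product `X ∧ Y`. -/
def Smash (X Y : Type) [TopologicalSpace X] [TopologicalSpace Y] (x₀ : X) (y₀ : Y) :
    Type :=
  Collapse {p : X × Y | p.1 = x₀ ∨ p.2 = y₀}

instance (X Y : Type) [TopologicalSpace X] [TopologicalSpace Y] (x₀ : X) (y₀ : Y) :
    TopologicalSpace (Smash X Y x₀ y₀) :=
  instTopologicalSpaceQuotient

/-- The quotient map `Q : X × Y → X ∧ Y`. -/
def smashQuot (X Y : Type) [TopologicalSpace X] [TopologicalSpace Y] (x₀ : X) (y₀ : Y) :
    C(X × Y, Smash X Y x₀ y₀) :=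
  ⟨Quotient.mk _, continuous_quotient_mk'⟩

/-- The reduced suspension `ΣX` of `(X, x₀)`. -/
def Susp (X : Type) [TopologicalSpace X] (x₀ : X) : Type :=
  Collapse {p : X × I | p.2 = 0 ∨ p.2 = 1 ∨ p.1 = x₀}

instance (X : Type) [TopologicalSpace X] (x₀ : X) : TopologicalSpace (Susp X x₀) :=
  instTopologicalSpaceQuotient

/-- The class of `(x, t)` in `ΣX`. -/
def suspMk {X : Type} [TopologicalSpace X] (x₀ : X) (x : X) (t : I) : Susp X x₀ :=
  Quotient.mk _ (x, t)

/-- The suspension `Σf` of a pointed map `f`. -/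
def suspMap {X Y : Type} [TopologicalSpace X] [TopologicalSpace Y]
    (x₀ : X) (y₀ : Y) (f : C(X, Y)) (hf : f x₀ = y₀) :
    C(Susp X x₀, Susp Y y₀) :=
  ⟨Quotient.lift (fun p => suspMk y₀ (f p.1) p.2)
    (by
      rintro p q (rfl | ⟨hp, hq⟩)
      · rfl
      · refine Quotient.sound (Or.inr ⟨?_, ?_⟩) <;>
        · first
          | rcases hp with h | h | h
            · exact Or.inl h
            · exact Or.inr (Or.inl h)
            · exact Or.inr (Or.inr (by rw [h, hf]))
          | rcases hq with h | h | h
            · exact Or.inl h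
            · exact Or.inr (Or.inl h)
            · exact Or.inr (Or.inr (by rw [h, hf]))),
    (continuous_quotient_mk'.comp ((map_continuous f).comp continuous_fst |>.prodMk
      continuous_snd)).quotient_lift _⟩

@[simp] theorem suspMap_mk {X Y : Type} [TopologicalSpace X] [TopologicalSpace Y]
    (x₀ : X) (y₀ : Y) (f : C(X, Y)) (hf : f x₀ = y₀) (x : X) (t : I) :
    suspMap x₀ y₀ f hf (suspMk x₀ x t) = suspMk y₀ (f x) t :=
  rfl

/-! ### Auxiliary machinery -/

namespace StmtSevenAux

open ContinuousMap Set

/-- Projection `ℝ → I`. -/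
noncomputable def pr : ℝ → I := Set.projIcc 0 1 zero_le_one

lemma pr_continuous : Continuous pr := continuous_projIcc

@[simp] lemma pr_coe (t : I) : pr (t : ℝ) = t := Set.projIcc_val zero_le_one t

@[simp] lemma pr_zero : pr (0 : ℝ) = 0 := by
  rw [show (0 : ℝ) = ((0 : I) : ℝ) by norm_num, pr_coe]

@[simp] lemma pr_one : pr (1 : ℝ) = 1 := by
  rw [show (1 : ℝ) = ((1 : I) : ℝ) by norm_num, pr_coe]

/-- Build a continuous family of loops from a continuous map on `(I × Z) × I`. -/
def mkFam {Z W : Type} [TopologicalSpace Z] [TopologicalSpace W] (w₀ : W)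
    (E : C((I × Z) × I, W))
    (he0 : ∀ p, E (p, 0) = w₀) (he1 : ∀ p, E (p, 1) = w₀) :
    C(I × Z, LoopSp W w₀) :=
  ⟨fun p => ⟨E.curry p, he0 p, he1 p⟩,
    Continuous.subtype_mk E.curry.continuous _⟩

@[simp] lemma mkFam_apply {Z W : Type} [TopologicalSpace Z] [TopologicalSpace W] (w₀ : W)
    (E : C((I × Z) × I, W)) (he0 : ∀ p, E (p, 0) = w₀) (he1 : ∀ p, E (p, 1) = w₀)
    (p : I × Z) (t : I) :
    ((mkFam w₀ E he0 he1 p : LoopSp W w₀) : C(I, W)) t = E (p, t) :=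
  rfl

/-- The "level" reparametrisation function. -/
noncomputable def phi (t : ℝ) : ℝ := min (min (3 * t) (3 - 3 * t)) 1

/-- The "across" reparametrisation function. -/
noncomputable def psi (t : ℝ) : ℝ := max (min (3 * t - 1) 1) 0

lemma phi_continuous : Continuous phi := by
  unfold phi; fun_prop

lemma psi_continuous : Continuous psi := by
  unfold psi; fun_prop

@[simp] lemma phi_zero : phi 0 = 0 := by norm_num [phi]
@[simp] lemma phi_one : phi 1 = 0 := by norm_num [phi]
@[simp] lemma psi_zero : psi 0 = 0 := by norm_num [psi]
@[simp] lemma psi_one : psi 1 = 1 := by norm_num [psi]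

lemma phi_symm (t : ℝ) : phi (1 - t) = phi t := by
  unfold phi
  rw [show 3 - 3 * (1 - t) = 3 * t by ring, show 3 * (1 - t) = 3 - 3 * t by ring,
    min_comm (3 - 3 * t) (3 * t)]

/-- The key null-homotopy lemma: if a family of loops `ℓ z` at `w₀` in `W` extends
to a map `G` on `I × Z × I` which is constant (`= w₀`) at level `1` and collapses
the boundary `t ∈ {0,1}` (independently of `z`), then the family is null-homotopic. -/
lemma nullLoop {Z W : Type} [TopologicalSpace Z] [TopologicalSpace W] (w₀ : W)
    (G : C(I × Z × I, W)) (ℓ : C(Z, LoopSp W w₀))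
    (h0 : ∀ z (t : I), G (0, z, t) = ((ℓ z : LoopSp W w₀) : C(I, W)) t)
    (h1 : ∀ z (t : I), G (1, z, t) = w₀)
    (hbd : ∀ (s : I) (z z' : Z) (b b' : I), (b = 0 ∨ b = 1) → (b' = 0 ∨ b' = 1) →
      G (s, z, b) = G (s, z', b')) :
    ℓ.Homotopic (ContinuousMap.const Z (constLoop W w₀)) := by
  have hG00 : ∀ z : Z, G (0, z, 0) = w₀ := fun z => by rw [h0 z 0]; exact (ℓ z).2.1
  have hG01 : ∀ z : Z, G (0, z, 1) = w₀ := fun z => by rw [h0 z 1]; exact (ℓ z).2.2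
  -- the symmetry of the middle loop
  have key : ∀ (t : ℝ) (z : Z),
      G (pr (phi (1 - t)), z, pr (psi (1 - t))) = G (pr (phi t), z, pr (psi t)) := by
    intro t z
    rw [phi_symm]
    rcases le_or_gt t (1 / 3) with h | h
    · have hψ : psi t = 0 := max_eq_right (min_le_of_left_le (by linarith))
      have hψ' : psi (1 - t) = 1 := by
        unfold psi
        rw [show 3 * (1 - t) - 1 = 2 - 3 * t by ring, min_eq_right (by linarith)]
        exact max_eq_left zero_le_one
      rw [hψ, hψ', pr_zero, pr_one]
      exact hbd _ z z 1 0 (Or.inr rfl) (Or.inl rfl)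
    · rcases le_or_gt t (2 / 3) with h' | h'
      · have hφ : phi t = 1 :=
          min_eq_right (le_min (by linarith) (by linarith))
        rw [hφ, pr_one, h1, h1]
      · have hψ : psi t = 1 := by
          unfold psi
          rw [min_eq_right (by linarith)]
          exact max_eq_left zero_le_one
        have hψ' : psi (1 - t) = 0 := by
          unfold psi
          rw [show 3 * (1 - t) - 1 = 2 - 3 * t by ring]
          exact max_eq_right (min_le_of_left_le (by linarith))
        rw [hψ, hψ', pr_zero, pr_one]
        exact hbd _ z z 0 1 (Or.inl rfl) (Or.inr rfl)
  -- the intermediate family of loops (the conjugated loop)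
  let Lfun : Z → ℝ → W := fun z t => G (pr (phi t), z, pr (psi t))
  have hL0 : ∀ z, Lfun z 0 = w₀ := fun z => by
    show G (pr (phi 0), z, pr (psi 0)) = w₀
    rw [phi_zero, psi_zero, pr_zero]; exact hG00 z
  have hL1 : ∀ z, Lfun z 1 = w₀ := fun z => by
    show G (pr (phi 1), z, pr (psi 1)) = w₀
    rw [phi_one, psi_one, pr_zero, pr_one]; exact hG01 z
  have hLcont : Continuous fun p : Z × ℝ => Lfun p.1 p.2 := by
    apply G.continuous.comp
    exact (pr_continuous.comp (phi_continuous.comp continuous_snd)).prodMk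
      (continuous_fst.prodMk (pr_continuous.comp (psi_continuous.comp continuous_snd)))
  let EL : C((I × Z) × I, W) :=
    ⟨fun p => Lfun p.1.2 (p.2 : ℝ),
      hLcont.comp ((continuous_snd.comp continuous_fst).prodMk
        (continuous_subtype_val.comp continuous_snd))⟩
  have hEL0 : ∀ p : I × Z, EL (p, 0) = w₀ := fun p => by
    show Lfun p.2 (((0 : I) : ℝ)) = w₀
    rw [show (((0 : I) : ℝ)) = (0 : ℝ) by norm_num]; exact hL0 p.2
  have hEL1 : ∀ p : I × Z, EL (p, 1) = w₀ := fun p => by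
    show Lfun p.2 (((1 : I) : ℝ)) = w₀
    rw [show (((1 : I) : ℝ)) = (1 : ℝ) by norm_num]; exact hL1 p.2
  let L : C(Z, LoopSp W w₀) :=
    (mkFam w₀ EL hEL0 hEL1).comp ⟨fun z => ((0 : I), z),
      continuous_const.prodMk continuous_id⟩
  -- stage 1 : from `ℓ` to `L`
  let E₁ : C((I × Z) × I, W) :=
    ⟨fun p => G (pr ((p.1.1 : ℝ) * phi (p.2 : ℝ)), p.1.2,
        pr ((1 - (p.1.1 : ℝ)) * (p.2 : ℝ) + (p.1.1 : ℝ) * psi (p.2 : ℝ))), by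
      have hs : Continuous fun p : (I × Z) × I => ((p.1.1 : ℝ)) :=
        continuous_subtype_val.comp (continuous_fst.comp continuous_fst)
      have ht : Continuous fun p : (I × Z) × I => ((p.2 : ℝ)) :=
        continuous_subtype_val.comp continuous_snd
      apply G.continuous.comp
      exact (pr_continuous.comp (hs.mul (phi_continuous.comp ht))).prodMk
        ((continuous_snd.comp continuous_fst).prodMk (pr_continuous.comp
          (((continuous_const.sub hs).mul ht).add (hs.mul (psi_continuous.comp ht)))))⟩
  have hE₁0 : ∀ p : I × Z, E₁ (p, 0) = w₀ := fun p => by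
    show G (pr ((p.1 : ℝ) * phi (((0 : I) : ℝ))), p.2,
      pr ((1 - (p.1 : ℝ)) * (((0 : I) : ℝ)) + (p.1 : ℝ) * psi (((0 : I) : ℝ)))) = w₀
    rw [show (((0 : I) : ℝ)) = (0 : ℝ) by norm_num,
      show (p.1 : ℝ) * phi 0 = 0 by rw [phi_zero]; ring,
      show (1 - (p.1 : ℝ)) * 0 + (p.1 : ℝ) * psi 0 = 0 by rw [psi_zero]; ring, pr_zero]
    exact hG00 p.2
  have hE₁1 : ∀ p : I × Z, E₁ (p, 1) = w₀ := fun p => by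
    show G (pr ((p.1 : ℝ) * phi (((1 : I) : ℝ))), p.2,
      pr ((1 - (p.1 : ℝ)) * (((1 : I) : ℝ)) + (p.1 : ℝ) * psi (((1 : I) : ℝ)))) = w₀
    rw [show (((1 : I) : ℝ)) = (1 : ℝ) by norm_num,
      show (p.1 : ℝ) * phi 1 = 0 by rw [phi_one]; ring,
      show (1 - (p.1 : ℝ)) * 1 + (p.1 : ℝ) * psi 1 = 1 by rw [psi_one]; ring,
      pr_zero, pr_one]
    exact hG01 p.2
  have Ht1 : ContinuousMap.Homotopy ℓ L :=
    { toContinuousMap := mkFam w₀ E₁ hE₁0 hE₁1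
      map_zero_left := by
        intro z
        apply Subtype.ext
        apply ContinuousMap.ext
        intro t
        show G (pr (((0 : I) : ℝ) * phi (t : ℝ)), z,
          pr ((1 - ((0 : I) : ℝ)) * (t : ℝ) + ((0 : I) : ℝ) * psi (t : ℝ))) = _
        rw [show (((0 : I) : ℝ)) = (0 : ℝ) by norm_num,
          show (0 : ℝ) * phi (t : ℝ) = 0 by ring,
          show (1 - (0 : ℝ)) * (t : ℝ) + 0 * psi (t : ℝ) = (t : ℝ) by ring,
          pr_zero, pr_coe]
        exact h0 z t
      map_one_left := by
        intro z
        apply Subtype.ext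
        apply ContinuousMap.ext
        intro t
        show G (pr (((1 : I) : ℝ) * phi (t : ℝ)), z,
          pr ((1 - ((1 : I) : ℝ)) * (t : ℝ) + ((1 : I) : ℝ) * psi (t : ℝ))) = _
        rw [show (((1 : I) : ℝ)) = (1 : ℝ) by norm_num,
          show (1 : ℝ) * phi (t : ℝ) = phi (t : ℝ) by ring,
          show (1 - (1 : ℝ)) * (t : ℝ) + 1 * psi (t : ℝ) = psi (t : ℝ) by ring]
        rfl }
  -- stage 2 : from `L` to the constant loop
  let E₂ : C((I × Z) × I, W) :=
    ⟨fun p => Lfun p.1.2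
        (min (min ((p.2 : ℝ)) (1 - (p.2 : ℝ))) ((1 - (p.1.1 : ℝ)) / 2)), by
      have hs : Continuous fun p : (I × Z) × I => ((p.1.1 : ℝ)) :=
        continuous_subtype_val.comp (continuous_fst.comp continuous_fst)
      have ht : Continuous fun p : (I × Z) × I => ((p.2 : ℝ)) :=
        continuous_subtype_val.comp continuous_snd
      exact hLcont.comp ((continuous_snd.comp continuous_fst).prodMk
        ((ht.min (continuous_const.sub ht)).min ((continuous_const.sub hs).div_const 2)))⟩
  have hE₂0 : ∀ p : I × Z, E₂ (p, 0) = w₀ := fun p => by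
    show Lfun p.2
      (min (min (((0 : I) : ℝ)) (1 - ((0 : I) : ℝ))) ((1 - (p.1 : ℝ)) / 2)) = w₀
    have hp1 : (p.1 : ℝ) ≤ 1 := p.1.2.2
    rw [show (((0 : I) : ℝ)) = (0 : ℝ) by norm_num,
      min_eq_left (by norm_num : (0 : ℝ) ≤ 1 - 0), min_eq_left (by linarith)]
    exact hL0 p.2
  have hE₂1 : ∀ p : I × Z, E₂ (p, 1) = w₀ := fun p => by
    show Lfun p.2
      (min (min (((1 : I) : ℝ)) (1 - ((1 : I) : ℝ))) ((1 - (p.1 : ℝ)) / 2)) = w₀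
    have hp1 : (p.1 : ℝ) ≤ 1 := p.1.2.2
    rw [show (((1 : I) : ℝ)) = (1 : ℝ) by norm_num,
      min_eq_right (by norm_num : (1 : ℝ) - 1 ≤ 1), show (1 : ℝ) - 1 = 0 by ring,
      min_eq_left (by linarith)]
    exact hL0 p.2
  have Ht2 : ContinuousMap.Homotopy L (ContinuousMap.const Z (constLoop W w₀)) :=
    { toContinuousMap := mkFam w₀ E₂ hE₂0 hE₂1
      map_zero_left := by
        intro z
        apply Subtype.ext
        apply ContinuousMap.ext
        intro t
        show Lfun z
          (min (min ((t : ℝ)) (1 - (t : ℝ))) ((1 - ((0 : I) : ℝ)) / 2)) = Lfun z (t : ℝ)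
        have ht0 : (0 : ℝ) ≤ (t : ℝ) := t.2.1
        have ht1 : (t : ℝ) ≤ 1 := t.2.2
        rw [show ((1 : ℝ) - ((0 : I) : ℝ)) / 2 = 1 / 2 by norm_num]
        rcases le_or_gt ((t : ℝ)) (1 - (t : ℝ)) with h | h
        · rw [min_eq_left h, min_eq_left (by linarith)]
        · rw [min_eq_right h.le, min_eq_left (by linarith)]
          have := key ((t : ℝ)) z
          show G (pr (phi (1 - (t : ℝ))), z, pr (psi (1 - (t : ℝ)))) = _
          exact this
      map_one_left := by
        intro z
        apply Subtype.ext
        apply ContinuousMap.ext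
        intro t
        show Lfun z
          (min (min ((t : ℝ)) (1 - (t : ℝ))) ((1 - ((1 : I) : ℝ)) / 2)) = w₀
        have ht0 : (0 : ℝ) ≤ (t : ℝ) := t.2.1
        have ht1 : (t : ℝ) ≤ 1 := t.2.2
        rw [show ((1 : ℝ) - ((1 : I) : ℝ)) / 2 = 0 by norm_num,
          min_eq_right (le_min ht0 (by linarith))]
        exact hL0 z }
  exact ContinuousMap.Homotopic.trans ⟨Ht1⟩ ⟨Ht2⟩

end StmtSevenAux

/-- Let `f : X → Y` be a pointed map whose suspension `Σf` is null-homotopic.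
Then for any map `g : Y → ΩW` which is the adjoint of a map `ĝ : ΣY → W`, the
composite `g ∘ f` is null-homotopic; in particular, for the quotient map
`Q : X × Y → X ∧ Y` onto the smash product, `ΩQ` is null-homotopic. -/
theorem stmt_7 (X Y W : Type) [TopologicalSpace X] [TopologicalSpace Y]
    [TopologicalSpace W] (x₀ : X) (y₀ : Y) (w₀ : W)
    (f : C(X, Y)) (hf : f x₀ = y₀)
    (hSf : (suspMap x₀ y₀ f hf).Homotopic
      (ContinuousMap.const (Susp X x₀) (suspMk y₀ y₀ 0)))
    (g : C(Y, LoopSp W w₀)) (gAdj : C(Susp Y y₀, W))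
    (hadj : ∀ (y : Y) (t : I), ((g y : C(I, W)) t) = gAdj (suspMk y₀ y t)) :
    (g.comp f).Homotopic (ContinuousMap.const X (constLoop W w₀)) ∧
    ∀ (A B : Type) [TopologicalSpace A] [TopologicalSpace B] (a₀ : A) (b₀ : B),
      (loopMap (smashQuot A B a₀ b₀) (a₀, b₀)).Homotopic
        (ContinuousMap.const (LoopSp (A × B) (a₀, b₀))
          (constLoop (Smash A B a₀ b₀) (smashQuot A B a₀ b₀ (a₀, b₀)))) := by
  constructor
  · -- Part 1: `g ∘ f` is null-homotopic
    obtain ⟨H⟩ := hSf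
    refine StmtSevenAux.nullLoop w₀
      ⟨fun p => gAdj (H (p.1, Quotient.mk _ (p.2.1, p.2.2))), by
        apply gAdj.continuous.comp
        apply H.continuous.comp
        exact continuous_fst.prodMk (continuous_quotient_mk'.comp
          ((continuous_fst.comp continuous_snd).prodMk
            (continuous_snd.comp continuous_snd)))⟩
      (g.comp f) ?_ ?_ ?_
    · intro z t
      show gAdj (H (0, suspMk x₀ z t)) = _
      rw [H.apply_zero, suspMap_mk]
      exact (hadj (f z) t).symm
    · intro z t
      show gAdj (H (1, suspMk x₀ z t)) = w₀
      rw [H.apply_one]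
      show gAdj (suspMk y₀ y₀ 0) = w₀
      rw [← hadj y₀ 0]
      exact (g y₀).2.1
    · intro s z z' b b' hb hb'
      show gAdj (H (s, suspMk x₀ z b)) = gAdj (H (s, suspMk x₀ z' b'))
      have hmem : ∀ (x : X) (c : I), (c = 0 ∨ c = 1) →
          (x, c) ∈ {p : X × I | p.2 = 0 ∨ p.2 = 1 ∨ p.1 = x₀} := by
        rintro x c (rfl | rfl)
        · exact Or.inl rfl
        · exact Or.inr (Or.inl rfl)
      have : suspMk x₀ z b = suspMk x₀ z' b' :=
        Quotient.sound (Or.inr ⟨hmem z b hb, hmem z' b' hb'⟩)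
      rw [this]
  · -- Part 2: `ΩQ` is null-homotopic
    intro A B _ _ a₀ b₀
    let E : C((I × LoopSp (A × B) (a₀, b₀)) × I, Smash A B a₀ b₀) :=
      ⟨fun p => smashQuot A B a₀ b₀
          (((p.1.2 : C(I, A × B)) p.2).1,
           ((p.1.2 : C(I, A × B)) (StmtSevenAux.pr ((1 - (p.1.1 : ℝ)) * (p.2 : ℝ)))).2), by
        have hγ : Continuous fun p : (I × LoopSp (A × B) (a₀, b₀)) × I =>
            (p.1.2 : C(I, A × B)) :=
          continuous_subtype_val.comp (continuous_snd.comp continuous_fst)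
        have hs : Continuous fun p : (I × LoopSp (A × B) (a₀, b₀)) × I => ((p.1.1 : ℝ)) :=
          continuous_subtype_val.comp (continuous_fst.comp continuous_fst)
        have ht : Continuous fun p : (I × LoopSp (A × B) (a₀, b₀)) × I => ((p.2 : ℝ)) :=
          continuous_subtype_val.comp continuous_snd
        apply (smashQuot A B a₀ b₀).continuous.comp
        refine Continuous.prodMk ?_ ?_
        · exact continuous_fst.comp (hγ.eval continuous_snd)
        · exact continuous_snd.comp (hγ.eval (StmtSevenAux.pr_continuous.comp
            ((continuous_const.sub hs).mul ht)))⟩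
    have hE0 : ∀ p, E (p, 0) = smashQuot A B a₀ b₀ (a₀, b₀) := by
      rintro ⟨s, γ⟩
      show smashQuot A B a₀ b₀
        (((γ : C(I, A × B)) 0).1,
         ((γ : C(I, A × B)) (StmtSevenAux.pr ((1 - (s : ℝ)) * ((0 : I) : ℝ)))).2) = _
      rw [show (((0 : I) : ℝ)) = (0 : ℝ) by norm_num, mul_zero, StmtSevenAux.pr_zero,
        γ.2.1]
    have hE1 : ∀ p, E (p, 1) = smashQuot A B a₀ b₀ (a₀, b₀) := by
      rintro ⟨s, γ⟩
      show smashQuot A B a₀ b₀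
        (((γ : C(I, A × B)) 1).1,
         ((γ : C(I, A × B)) (StmtSevenAux.pr ((1 - (s : ℝ)) * ((1 : I) : ℝ)))).2) = _
      rw [γ.2.2]
      exact Quotient.sound (Or.inr ⟨Or.inl rfl, Or.inl rfl⟩)
    refine ⟨{ toContinuousMap := StmtSevenAux.mkFam _ E hE0 hE1
              map_zero_left := ?_
              map_one_left := ?_ }⟩
    · intro γ
      apply Subtype.ext
      apply ContinuousMap.ext
      intro t
      show smashQuot A B a₀ b₀
        (((γ : C(I, A × B)) t).1,
         ((γ : C(I, A × B)) (StmtSevenAux.pr ((1 - ((0 : I) : ℝ)) * (t : ℝ)))).2) = _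
      rw [show (((0 : I) : ℝ)) = (0 : ℝ) by norm_num,
        show (1 - (0 : ℝ)) * (t : ℝ) = (t : ℝ) by ring, StmtSevenAux.pr_coe,
        Prod.mk.eta]
      rfl
    · intro γ
      apply Subtype.ext
      apply ContinuousMap.ext
      intro t
      show smashQuot A B a₀ b₀
        (((γ : C(I, A × B)) t).1,
         ((γ : C(I, A × B)) (StmtSevenAux.pr ((1 - ((1 : I) : ℝ)) * (t : ℝ)))).2) = _
      rw [show (((1 : I) : ℝ)) = (1 : ℝ) by norm_num,
        show (1 - (1 : ℝ)) * (t : ℝ) = (0 : ℝ) by ring, StmtSevenAux.pr_zero, γ.2.1]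
      exact Quotient.sound (Or.inr ⟨Or.inr rfl, Or.inr rfl⟩)
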